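/- Let Q₁ and Q₂ be any two real quadratic forms on ℝ³. Then there exist real numbers (a, b) ≠ (0, 0) and an invertible linear map M : ℝ³ → ℝ³ such that the quadratic form ξ ↦ a·Q₁(Mξ) + b·Q₂(Mξ) does not depend on the third coordinate ξ₃ (equivalently, its partial derivative in ξ₃ vanishes identically). -/

import Mathlib

open Polynomial Filter Matrix

/-- A monic real polynomial of degree 3 has a real root. -/
lemma cubic_has_root (p : ℝ[X]) (hm : p.Monic) (hd : p.natDegree = 3) :
    ∃ x : ℝ, p.eval x = 0 := by
  have hdpos : 0 < p.degree := natDegree_pos_iff_degree_pos.mp (by omega)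
  have htop : Tendsto (fun x => p.eval x) atTop atTop :=
    p.tendsto_atTop_of_leadingCoeff_nonneg hdpos (by rw [hm.leadingCoeff]; norm_num)
  set q : ℝ[X] := p.comp (-X) with hq
  have hqn : q.natDegree = 3 := by
    rw [hq, natDegree_comp, hd]
    simp
  have hqlc : q.leadingCoeff = -1 := by
    rw [hq, leadingCoeff_comp (by simp)]
    norm_num [hm.leadingCoeff, hd]
  have hqd : 0 < q.degree := natDegree_pos_iff_degree_pos.mp (by omega)
  have hqbot : Tendsto (fun x => q.eval x) atTop atBot :=
    q.tendsto_atBot_of_leadingCoeff_nonpos hqd (by rw [hqlc]; norm_num)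
  have hbot : Tendsto (fun x => p.eval x) atBot atBot := by
    have : (fun x => p.eval x) = (fun y => q.eval y) ∘ (fun x : ℝ => -x) := by
      funext x
      simp [hq, eval_comp]
    rw [this]
    exact hqbot.comp tendsto_neg_atBot_atTop
  have hsurj : Function.Surjective (fun x => p.eval x) :=
    Continuous.surjective (p.continuous_aeval) htop hbot
  obtain ⟨x, hx⟩ := hsurj 0
  exact ⟨x, hx⟩

/-- Some nontrivial combination of two 3×3 real matrices has zero determinant. -/
lemma exists_det_combo_zero (A₁ A₂ : Matrix (Fin 3) (Fin 3) ℝ) :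
    ∃ a b : ℝ, (a, b) ≠ (0, 0) ∧ (a • A₁ + b • A₂).det = 0 := by
  by_cases h : A₁.det = 0
  · exact ⟨1, 0, by simp, by simpa using h⟩
  · set B : Matrix (Fin 3) (Fin 3) ℝ := A₁⁻¹ * A₂ with hB
    set p : ℝ[X] := (-B).charpoly with hp
    obtain ⟨a₀, ha₀⟩ := cubic_has_root p ((-B).charpoly_monic)
      (by rw [hp, Matrix.charpoly_natDegree_eq_dim]; simp)
    have heval : p.eval a₀ = (a₀ • (1 : Matrix (Fin 3) (Fin 3) ℝ) + B).det := by
      rw [hp, Matrix.charpoly, ← Polynomial.coe_evalRingHom, RingHom.map_det]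
      congr 1
      ext i j
      by_cases hij : i = j <;>
        simp [Matrix.charmatrix_apply, Matrix.one_apply, hij, Matrix.diagonal_apply,
          sub_neg_eq_add]
    refine ⟨a₀, 1, by simp, ?_⟩
    have key : a₀ • A₁ + (1 : ℝ) • A₂ = A₁ * (a₀ • (1 : Matrix (Fin 3) (Fin 3) ℝ) + B) := by
      rw [Matrix.mul_add, Matrix.mul_smul, Matrix.mul_one, hB, ← Matrix.mul_assoc,
        Matrix.mul_nonsing_inv _ (isUnit_iff_ne_zero.mpr h), Matrix.one_mul, one_smul]
    rw [key, Matrix.det_mul, ← heval, ha₀, mul_zero]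

set_option maxHeartbeats 1000000 in
theorem stmt16 (Q₁ Q₂ : QuadraticForm ℝ (Fin 3 → ℝ)) :
    ∃ a b : ℝ, (a, b) ≠ (0, 0) ∧
      ∃ M : (Fin 3 → ℝ) ≃ₗ[ℝ] (Fin 3 → ℝ),
        ∀ ξ ξ' : Fin 3 → ℝ, ξ 0 = ξ' 0 → ξ 1 = ξ' 1 →
          a * Q₁ (M ξ) + b * Q₂ (M ξ) = a * Q₁ (M ξ') + b * Q₂ (M ξ') := by
  classical
  set B₁ := Q₁.polarBilin with hB₁
  set B₂ := Q₂.polarBilin with hB₂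
  set A₁ := LinearMap.toMatrix₂' ℝ B₁ with hA₁
  set A₂ := LinearMap.toMatrix₂' ℝ B₂ with hA₂
  obtain ⟨a, b, hab, hdet⟩ := exists_det_combo_zero A₁ A₂
  obtain ⟨v, hv, hAv⟩ := (Matrix.exists_mulVec_eq_zero_iff).mpr hdet
  -- the combined polar form kills v on the right
  have hkill : ∀ x : Fin 3 → ℝ,
      a * QuadraticMap.polar Q₁ x v + b * QuadraticMap.polar Q₂ x v = 0 := by
    intro x
    have h1 : QuadraticMap.polar Q₁ x v = Matrix.toLinearMap₂' ℝ A₁ x v := by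
      rw [hA₁, Matrix.toLinearMap₂'_toMatrix']
      simp [hB₁]
    have h2 : QuadraticMap.polar Q₂ x v = Matrix.toLinearMap₂' ℝ A₂ x v := by
      rw [hA₂, Matrix.toLinearMap₂'_toMatrix']
      simp [hB₂]
    have : x ⬝ᵥ ((a • A₁ + b • A₂) *ᵥ v) = 0 := by rw [hAv, dotProduct_zero]
    rw [h1, h2]
    calc a * Matrix.toLinearMap₂' ℝ A₁ x v + b * Matrix.toLinearMap₂' ℝ A₂ x v
        = Matrix.toLinearMap₂' ℝ (a • A₁ + b • A₂) x v := by
          simp [Matrix.toLinearMap₂'_apply', Matrix.add_mulVec, Matrix.smul_mulVec,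
            dotProduct_add, dotProduct_smul, smul_eq_mul]
      _ = x ⬝ᵥ ((a • A₁ + b • A₂) *ᵥ v) := Matrix.toLinearMap₂'_apply' _ _ _
      _ = 0 := this
  have hQv : a * Q₁ v + b * Q₂ v = 0 := by
    have := hkill v
    rw [QuadraticMap.polar_self, QuadraticMap.polar_self] at this
    simp only [two_smul] at this
    linarith
  -- build a basis whose third vector is v
  have hli : LinearIndepOn ℝ id ({v} : Set (Fin 3 → ℝ)) :=
    LinearIndepOn.singleton (v := id) hv
  let bas := Module.Basis.extend hli
  haveI : Fintype (hli.extend (Set.subset_univ _)) :=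
    FiniteDimensional.fintypeBasisIndex bas
  have hcard : Fintype.card (hli.extend (Set.subset_univ ({v} : Set (Fin 3 → ℝ)))) = 3 := by
    have := Module.finrank_eq_card_basis bas
    simpa using this.symm
  have hvmem : v ∈ hli.extend (Set.subset_univ _) :=
    hli.subset_extend _ rfl
  let e₀ : (hli.extend (Set.subset_univ _)) ≃ Fin 3 := Fintype.equivFinOfCardEq hcard
  let e : (hli.extend (Set.subset_univ _)) ≃ Fin 3 :=
    e₀.trans (Equiv.swap (e₀ ⟨v, hvmem⟩) 2)
  let b' : Module.Basis (Fin 3) ℝ (Fin 3 → ℝ) := bas.reindex e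
  have hb'2 : b' 2 = v := by
    have he : e ⟨v, hvmem⟩ = 2 := by
      simp [e, Equiv.swap_apply_left]
    have : b' (e ⟨v, hvmem⟩) = bas ⟨v, hvmem⟩ := by
      simp [b', Module.Basis.reindex_apply]
    rw [he] at this
    rw [this, Module.Basis.extend_apply_self]
  refine ⟨a, b, hab, b'.equivFun.symm, ?_⟩
  intro ξ ξ' h0 h1
  set M := b'.equivFun.symm with hM
  have hMξ : M ξ' = M ξ + (ξ' 2 - ξ 2) • v := by
    have hsum : ∀ η : Fin 3 → ℝ, M η = η 0 • b' 0 + η 1 • b' 1 + η 2 • b' 2 := by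
      intro η
      rw [hM, Module.Basis.equivFun_symm_apply, Fin.sum_univ_three]
    rw [hsum ξ, hsum ξ', h0, h1, hb'2]
    ring_nf
    module
  rw [hMξ]
  set x := M ξ with hx
  set c := ξ' 2 - ξ 2 with hc
  have hQ1 : Q₁ (x + c • v) = Q₁ x + c^2 * Q₁ v + c * QuadraticMap.polar Q₁ x v := by
    rw [show Q₁ (x + c • v) = Q₁ x + Q₁ (c • v) + QuadraticMap.polar Q₁ x (c • v) by
      rw [QuadraticMap.polar]; ring]
    rw [QuadraticMap.map_smul, QuadraticMap.polar_smul_right]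
    simp only [smul_eq_mul]
    ring
  have hQ2 : Q₂ (x + c • v) = Q₂ x + c^2 * Q₂ v + c * QuadraticMap.polar Q₂ x v := by
    rw [show Q₂ (x + c • v) = Q₂ x + Q₂ (c • v) + QuadraticMap.polar Q₂ x (c • v) by
      rw [QuadraticMap.polar]; ring]
    rw [QuadraticMap.map_smul, QuadraticMap.polar_smul_right]
    simp only [smul_eq_mul]
    ring
  rw [hQ1, hQ2]
  have hk := hkill x
  linear_combination (-(c^2)) * hQv - c * hk
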